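/- Let x_1, …, x_n be positive integers and L ∈ ℕ. Set T = 2·max_{i ∈ [n]} x_i and consider the network consisting of nodes s and t joined by n parallel arcs a_1, …, a_n, where each arc a_i has capacity 1, cost 1, and transit time τ(a_i) = T − x_i. Then there exists an integral temporally repeated flow with time horizon T of value at least L and peak cost at most L if and only if there exists a subset S ⊆ [n] with Σ_{i ∈ S} x_i = L. Consequently, integral minimum-peak-cost temporally repeated flow is at least weakly NP-hard, even on series-parallel graphs with unit costs and a short time horizon. -/

import Mathlib

open MeasureTheory

/-- A network over time: a digraph with arc capacities `u`, costs `c`,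
transit times `τ`, a source `s` and a sink `t`. -/
structure Network (V : Type) (A : Type) where
  tail : A → V
  head : A → V
  u : A → ℕ
  c : A → ℕ
  τ : A → ℕ
  s : V
  t : V

namespace Network

variable {V A : Type}

/-- The node sequence visited by a list of arcs. -/
def nodes (N : Network V A) : List A → List V
  | [] => []
  | a :: rest => N.tail a :: ((a :: rest).map N.head)

/-- `p` is a simple `s`-`t` path (a non-empty list of consecutive arcs starting at
the source, ending at the sink and visiting pairwise distinct nodes). -/
def IsSTPath (N : Network V A) (p : List A) : Prop :=
  p ≠ [] ∧ List.Chain' (fun a b => N.head a = N.tail b) p ∧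
    (∀ a ∈ p.head?, N.tail a = N.s) ∧ (∀ a ∈ p.getLast?, N.head a = N.t) ∧
    (N.nodes p).Nodup

/-- `p` is a non-empty closed walk, i.e. a cycle. -/
def IsCycle (N : Network V A) (p : List A) : Prop :=
  p ≠ [] ∧ List.Chain' (fun a b => N.head a = N.tail b) p ∧
    ∀ a ∈ p.head?, ∀ b ∈ p.getLast?, N.head b = N.tail a

/-- The network contains no directed cycle. -/
def Acyclic (N : Network V A) : Prop := ∀ p : List A, ¬ N.IsCycle p

/-- Transit time (length) of a path. -/
def pathTime (N : Network V A) (p : List A) : ℕ := (p.map N.τ).sum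

/-- Bottleneck capacity of a path. -/
noncomputable def bottleneck (N : Network V A) (p : List A) : ℕ :=
  sInf (N.u '' {a | a ∈ p})

section
variable [DecidableEq A]

/-- Transit time of the part of `p` strictly before arc `a`. -/
def prefixTime (N : Network V A) (p : List A) (a : A) : ℕ :=
  ((p.takeWhile fun b => b ≠ a).map N.τ).sum

/-- Transit time of the part of `p` from arc `a` onwards. -/
def suffixTime (N : Network V A) (p : List A) (a : A) : ℕ :=
  ((p.dropWhile fun b => b ≠ a).map N.τ).sum

/-- Inflow rate into arc `a` at time `θ` of the temporally repeated flow with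
horizon `T` induced by the path decomposition `y`. -/
noncomputable def trRate (N : Network V A) (y : List A → ℝ) (T : ℝ) (a : A) (θ : ℝ) : ℝ :=
  ∑ᶠ p ∈ {p : List A | N.IsSTPath p ∧ (N.pathTime p : ℝ) ≤ T ∧ a ∈ p ∧
    (N.prefixTime p a : ℝ) ≤ θ ∧ (N.suffixTime p a : ℝ) < T - θ}, y p

/-- Static flow on arc `a` induced by the path decomposition `y`. -/
noncomputable def staticOf (N : Network V A) (y : List A → ℝ) (a : A) : ℝ :=
  ∑ᶠ p ∈ {p : List A | a ∈ p}, y p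

/-- `y` is a feasible (capacity-respecting) path decomposition of a static flow. -/
def IsDecomposition (N : Network V A) (y : List A → ℝ) : Prop :=
  (∀ p, 0 ≤ y p) ∧ (∀ p, y p ≠ 0 → N.IsSTPath p) ∧
    (Function.support y).Finite ∧ ∀ a : A, N.staticOf y a ≤ N.u a

/-- Value of the temporally repeated flow induced by `y` with horizon `T`. -/
noncomputable def trValue (N : Network V A) (y : List A → ℝ) (T : ℝ) : ℝ :=
  ∑ᶠ p ∈ {p : List A | N.IsSTPath p ∧ (N.pathTime p : ℝ) ≤ T}, y p * (T - N.pathTime p)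

/-- Amount of flow of the TR flow induced by `y` that has reached the sink by time `θ`. -/
noncomputable def arrTR (N : Network V A) (y : List A → ℝ) (θ : ℝ) : ℝ :=
  ∑ᶠ p ∈ {p : List A | N.IsSTPath p ∧ (N.pathTime p : ℝ) ≤ θ}, y p * (θ - N.pathTime p)

end

/-- All flow rates of the decomposition are (nonnegative) integers. -/
def IsIntegral (y : List A → ℝ) : Prop := ∀ p, ∃ n : ℕ, y p = n

section
variable [Fintype A]

/-- Cost of a flow over time `f` at time point `θ`. -/
noncomputable def costAt (N : Network V A) (f : A → ℝ → ℝ) (θ : ℝ) : ℝ :=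
  ∑ a : A, (N.c a : ℝ) * ∫ ξ in (θ - (N.τ a : ℝ))..θ, f a ξ

/-- Peak cost of a flow over time `f` with horizon `T`. -/
noncomputable def peakCost (N : Network V A) (f : A → ℝ → ℝ) (T : ℝ) : ℝ :=
  sSup (N.costAt f '' Set.Ico 0 T)

/-- Peak cost of the TR flow induced by the decomposition `y`. -/
noncomputable def trPeakCost [DecidableEq A] (N : Network V A) (y : List A → ℝ) (T : ℝ) : ℝ :=
  N.peakCost (N.trRate y T) T

variable [DecidableEq V]

/-- Cumulative flow having entered node `v` by time `θ`. -/
noncomputable def inflowBy (N : Network V A) (f : A → ℝ → ℝ) (v : V) (θ : ℝ) : ℝ :=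
  ∑ a ∈ Finset.univ.filter (fun a => N.head a = v), ∫ ξ in (0:ℝ)..(θ - (N.τ a : ℝ)), f a ξ

/-- Cumulative flow having left node `v` by time `θ`. -/
noncomputable def outflowBy (N : Network V A) (f : A → ℝ → ℝ) (v : V) (θ : ℝ) : ℝ :=
  ∑ a ∈ Finset.univ.filter (fun a => N.tail a = v), ∫ ξ in (0:ℝ)..θ, f a ξ

/-- A feasible flow over time with horizon `T`. -/
def IsFlowOverTime (N : Network V A) (T : ℝ) (f : A → ℝ → ℝ) : Prop :=
  (∀ a, Measurable (f a)) ∧ (∀ a θ, 0 ≤ f a θ) ∧ (∀ a θ, f a θ ≤ N.u a) ∧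
    (∀ a θ, T - (N.τ a : ℝ) < θ → f a θ = 0) ∧ (∀ a θ, θ < 0 → f a θ = 0) ∧
    ∀ v, v ≠ N.s → v ≠ N.t → ∀ θ ∈ Set.Ico (0:ℝ) T,
      N.outflowBy f v θ ≤ N.inflowBy f v θ

/-- Value of a flow over time with horizon `T`. -/
noncomputable def fotValue (N : Network V A) (T : ℝ) (f : A → ℝ → ℝ) : ℝ :=
  N.outflowBy f N.s T - N.inflowBy f N.s T

/-- Amount of flow of a flow over time arrived at the sink by time `θ`. -/
noncomputable def arrivedBy (N : Network V A) (f : A → ℝ → ℝ) (θ : ℝ) : ℝ :=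
  N.inflowBy f N.t θ - N.outflowBy f N.t θ

/-- Feasibility of a static `s`-`t` flow. -/
def IsStaticFlow (N : Network V A) (x : A → ℝ) : Prop :=
  (∀ a, 0 ≤ x a) ∧ (∀ a, x a ≤ N.u a) ∧
    ∀ v, v ≠ N.s → v ≠ N.t →
      ∑ a ∈ Finset.univ.filter (fun a => N.head a = v), x a =
      ∑ a ∈ Finset.univ.filter (fun a => N.tail a = v), x a

/-- Value of a static `s`-`t` flow. -/
noncomputable def staticValue (N : Network V A) (x : A → ℝ) : ℝ :=
  ∑ a ∈ Finset.univ.filter (fun a => N.tail a = N.s), x a -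
  ∑ a ∈ Finset.univ.filter (fun a => N.head a = N.s), x a

end

end Network

open Network

/-- The network of Theorem 4.4: `n` parallel arcs from `s = 0` to `t = 1`, where arc
`i` has capacity `1`, cost `1` and transit time `T − xᵢ` for `T = 2·max_i xᵢ`. -/
def N₆ (n : ℕ) (x : Fin n → ℕ) : Network (Fin 2) (Fin n) where
  tail := fun _ => 0
  head := fun _ => 1
  u := fun _ => 1
  c := fun _ => 1
  τ := fun i => 2 * Finset.univ.sup x - x i
  s := 0
  t := 1


/-! ### Auxiliary lemmas for stmt6 -/

section StmtSix

open Network Set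

variable {n : ℕ} {x : Fin n → ℕ}

open Classical in
/-- The canonical decomposition sending one unit along each arc in `S`. -/
noncomputable def yS (S : Finset (Fin n)) : List (Fin n) → ℝ :=
  fun p => if ∃ i ∈ S, p = [i] then 1 else 0

lemma yS_singleton (S : Finset (Fin n)) (i : Fin n) :
    yS S [i] = if i ∈ S then 1 else 0 := by
  unfold yS
  by_cases h : i ∈ S
  · rw [if_pos ⟨i, h, rfl⟩, if_pos h]
  · rw [if_neg, if_neg h]
    rintro ⟨j, hj, hji⟩
    obtain rfl : i = j := by simpa using hji
    exact h hj

lemma yS_ne_zero {S : Finset (Fin n)} {p : List (Fin n)} (h : yS S p ≠ 0) :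
    ∃ i ∈ S, p = [i] := by
  by_contra hc
  exact h (by unfold yS; rw [if_neg hc])

lemma isSTPath_iff (p : List (Fin n)) : (N₆ n x).IsSTPath p ↔ ∃ i, p = [i] := by
  constructor
  · rintro ⟨hne, hchain, -, -, -⟩
    match p with
    | [] => exact absurd rfl hne
    | [i] => exact ⟨i, rfl⟩
    | a :: b :: l =>
      exfalso
      have h1 := (List.isChain_cons_cons.1 hchain).1
      simp only [N₆] at h1
      exact absurd h1 (by decide)
  · rintro ⟨i, rfl⟩
    refine ⟨by simp, List.isChain_singleton _, ?_, ?_, ?_⟩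
    · intro a ha
      simp only [List.head?_cons, Option.mem_def, Option.some.injEq] at ha
      subst ha; rfl
    · intro a ha
      simp only [List.getLast?_singleton, Option.mem_def, Option.some.injEq] at ha
      subst ha; rfl
    · show ((N₆ n x).tail i :: ([i].map (N₆ n x).head)).Nodup
      simp only [List.map_cons, List.map_nil]
      show ((0 : Fin 2) :: [1]).Nodup
      decide

lemma pathTime_singleton (i : Fin n) :
    (N₆ n x).pathTime [i] = 2 * Finset.univ.sup x - x i := by
  simp [Network.pathTime, N₆]

lemma x_le_sup (i : Fin n) : x i ≤ Finset.univ.sup x :=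
  Finset.le_sup (Finset.mem_univ i)

lemma x_le_two_sup (i : Fin n) : x i ≤ 2 * Finset.univ.sup x :=
  (x_le_sup i).trans (by omega)

lemma tau_cast (i : Fin n) :
    (((N₆ n x).τ i : ℝ)) = 2 * ((Finset.univ.sup x : ℕ) : ℝ) - x i := by
  show (((2 * Finset.univ.sup x - x i : ℕ) : ℝ)) = _
  rw [Nat.cast_sub (x_le_two_sup i)]
  push_cast
  ring

lemma pathTime_singleton_cast (i : Fin n) :
    (((N₆ n x).pathTime [i] : ℝ)) = 2 * ((Finset.univ.sup x : ℕ) : ℝ) - x i := by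
  rw [pathTime_singleton, ← tau_cast]
  rfl

lemma prefixTime_singleton (i : Fin n) : (N₆ n x).prefixTime [i] i = 0 := by
  simp [Network.prefixTime]

lemma suffixTime_singleton (i : Fin n) :
    (N₆ n x).suffixTime [i] i = 2 * Finset.univ.sup x - x i := by
  simp [Network.suffixTime, N₆]

lemma trValue_yS (S : Finset (Fin n)) :
    (N₆ n x).trValue (yS S) ((2 * Finset.univ.sup x : ℕ) : ℝ) = ∑ i ∈ S, (x i : ℝ) := by
  unfold Network.trValue
  rw [finsum_mem_eq_sum_of_inter_support_eq _ (t := S.image (fun i => [i]))]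
  · rw [Finset.sum_image (by intro a _ b _ h; simpa using h)]
    apply Finset.sum_congr rfl
    intro i hi
    rw [yS_singleton, if_pos hi, one_mul, pathTime_singleton_cast]
    push_cast
    ring
  · ext p
    simp only [Set.mem_inter_iff, Function.mem_support, Set.mem_setOf_eq,
      Finset.coe_image, Set.mem_image, Finset.mem_coe]
    constructor
    · rintro ⟨-, hsupp⟩
      have hy : yS S p ≠ 0 := left_ne_zero_of_mul hsupp
      obtain ⟨i, hi, rfl⟩ := yS_ne_zero hy
      exact ⟨⟨i, hi, rfl⟩, hsupp⟩
    · rintro ⟨⟨i, hi, rfl⟩, hsupp⟩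
      refine ⟨⟨(isSTPath_iff _).2 ⟨i, rfl⟩, ?_⟩, hsupp⟩
      rw [pathTime_singleton_cast]
      push_cast
      have : (0:ℝ) ≤ x i := by positivity
      linarith

lemma staticOf_yS (S : Finset (Fin n)) (a : Fin n) :
    (N₆ n x).staticOf (yS S) a = if a ∈ S then 1 else 0 := by
  unfold Network.staticOf
  rw [finsum_mem_eq_sum_of_inter_support_eq _ (t := {[a]}), Finset.sum_singleton,
    yS_singleton]
  ext p
  simp only [Set.mem_inter_iff, Function.mem_support, Set.mem_setOf_eq,
    Finset.coe_singleton, Set.mem_singleton_iff]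
  constructor
  · rintro ⟨hap, hsupp⟩
    obtain ⟨i, hi, rfl⟩ := yS_ne_zero hsupp
    obtain rfl : a = i := by simpa using hap
    exact ⟨rfl, hsupp⟩
  · rintro ⟨rfl, hsupp⟩
    exact ⟨List.mem_singleton.2 rfl, hsupp⟩

lemma isDecomposition_yS (S : Finset (Fin n)) : (N₆ n x).IsDecomposition (yS S) := by
  refine ⟨?_, ?_, ?_, ?_⟩
  · intro p
    unfold yS
    split <;> norm_num
  · intro p hp
    obtain ⟨i, -, rfl⟩ := yS_ne_zero hp
    exact (isSTPath_iff _).2 ⟨i, rfl⟩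
  · apply Set.Finite.subset (Set.Finite.image (fun i => [i]) S.finite_toSet)
    intro p hp
    obtain ⟨i, hi, rfl⟩ := yS_ne_zero hp
    exact ⟨i, hi, rfl⟩
  · intro a
    rw [staticOf_yS]
    show _ ≤ ((1:ℕ):ℝ)
    split <;> norm_num

lemma isIntegral_yS (S : Finset (Fin n)) : IsIntegral (yS S) := by
  intro p
  unfold yS
  split
  · exact ⟨1, by norm_num⟩
  · exact ⟨0, by norm_num⟩

lemma trRate_yS (S : Finset (Fin n)) (a : Fin n) (θ : ℝ) :
    (N₆ n x).trRate (yS S) ((2 * Finset.univ.sup x : ℕ) : ℝ) a θ =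
      (Set.Ico (0:ℝ) (x a)).indicator (fun _ => if a ∈ S then (1:ℝ) else 0) θ := by
  unfold Network.trRate
  by_cases hθ : 0 ≤ θ ∧ θ < (x a : ℝ)
  · rw [Set.indicator_of_mem (by exact ⟨hθ.1, hθ.2⟩)]
    rw [finsum_mem_eq_sum_of_inter_support_eq _ (t := {[a]}), Finset.sum_singleton,
      yS_singleton]
    ext p
    simp only [Set.mem_inter_iff, Function.mem_support, Set.mem_setOf_eq,
      Finset.coe_singleton, Set.mem_singleton_iff]
    constructor
    · rintro ⟨⟨-, -, hap, -, -⟩, hsupp⟩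
      obtain ⟨i, hi, rfl⟩ := yS_ne_zero hsupp
      obtain rfl : a = i := by simpa using hap
      exact ⟨rfl, hsupp⟩
    · rintro ⟨rfl, hsupp⟩
      refine ⟨⟨(isSTPath_iff _).2 ⟨a, rfl⟩, ?_, List.mem_singleton.2 rfl, ?_, ?_⟩, hsupp⟩
      · rw [pathTime_singleton_cast]
        push_cast
        have : (0:ℝ) ≤ x a := by positivity
        linarith
      · rw [show (N₆ n x).prefixTime [a] a = 0 from prefixTime_singleton a]
        exact_mod_cast hθ.1
      · show (((N₆ n x).suffixTime [a] a : ℝ)) < _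
        rw [suffixTime_singleton, ← show ((N₆ n x).τ a) = 2 * Finset.univ.sup x - x a from rfl,
          tau_cast]
        push_cast
        linarith [hθ.2]
  · rw [Set.indicator_of_notMem (by exact fun hmem => hθ ⟨hmem.1, hmem.2⟩)]
    rw [finsum_mem_eq_sum_of_inter_support_eq _ (t := ∅), Finset.sum_empty]
    ext p
    simp only [Set.mem_inter_iff, Function.mem_support, Set.mem_setOf_eq,
      Finset.coe_empty, Set.mem_empty_iff_false, false_and, iff_false]
    rintro ⟨⟨-, -, hap, hpre, hsuf⟩, hsupp⟩
    obtain ⟨i, hi, rfl⟩ := yS_ne_zero hsupp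
    obtain rfl : a = i := by simpa using hap
    apply hθ
    constructor
    · rw [show (N₆ n x).prefixTime [a] a = 0 from prefixTime_singleton a] at hpre
      exact_mod_cast hpre
    · rw [show ((N₆ n x).suffixTime [a] a) = (N₆ n x).τ a from suffixTime_singleton a,
        tau_cast] at hsuf
      push_cast at hsuf
      linarith

lemma integral_rate_le (r c : ℝ) (hr : 0 ≤ r) (hc : 0 ≤ c) {a b : ℝ} (hab : a ≤ b) :
    ∫ ξ in a..b, (Set.Ico (0:ℝ) c).indicator (fun _ => r) ξ ≤ r * c := by
  rw [intervalIntegral.integral_of_le hab,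
    MeasureTheory.setIntegral_indicator measurableSet_Ico,
    MeasureTheory.setIntegral_const, Set.inter_comm (Set.Ioc a b)]
  have h1 : volume (Set.Ico (0:ℝ) c ∩ Set.Ioc a b) ≤ ENNReal.ofReal c := by
    calc volume (Set.Ico (0:ℝ) c ∩ Set.Ioc a b) ≤ volume (Set.Ico (0:ℝ) c) :=
          measure_mono Set.inter_subset_left
      _ = ENNReal.ofReal c := by rw [Real.volume_Ico, sub_zero]
  have h2 := ENNReal.toReal_le_of_le_ofReal hc h1
  calc (volume (Set.Ico (0:ℝ) c ∩ Set.Ioc a b)).toReal • r ≤ c • r :=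
        smul_le_smul_of_nonneg_right h2 hr
    _ = r * c := by rw [smul_eq_mul]; ring

lemma integral_rate_eq (r c : ℝ) (hc : 0 ≤ c) {a b : ℝ} (ha : a ≤ 0) (hb : c ≤ b) :
    ∫ ξ in a..b, (Set.Ico (0:ℝ) c).indicator (fun _ => r) ξ = r * c := by
  rw [intervalIntegral.integral_of_le (ha.trans (hc.trans hb)),
    MeasureTheory.setIntegral_indicator measurableSet_Ico,
    MeasureTheory.setIntegral_const, Set.inter_comm (Set.Ioc a b)]
  have hvol : volume (Set.Ico (0:ℝ) c ∩ Set.Ioc a b) = ENNReal.ofReal c := by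
    apply le_antisymm
    · calc volume (Set.Ico (0:ℝ) c ∩ Set.Ioc a b) ≤ volume (Set.Ico (0:ℝ) c) :=
            measure_mono Set.inter_subset_left
        _ = ENNReal.ofReal c := by rw [Real.volume_Ico, sub_zero]
    · have hsub : Set.Ioo (0:ℝ) c ⊆ Set.Ico (0:ℝ) c ∩ Set.Ioc a b := by
        rintro ξ ⟨h0, hξc⟩
        exact ⟨⟨h0.le, hξc⟩, lt_of_le_of_lt ha h0, hξc.le.trans hb⟩
      calc ENNReal.ofReal c = volume (Set.Ioo (0:ℝ) c) := by rw [Real.volume_Ioo, sub_zero]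
        _ ≤ _ := measure_mono hsub
  rw [measureReal_def, hvol, ENNReal.toReal_ofReal hc, smul_eq_mul]
  ring

lemma costAt_yS_le (S : Finset (Fin n)) (θ : ℝ) :
    (N₆ n x).costAt ((N₆ n x).trRate (yS S) ((2 * Finset.univ.sup x : ℕ) : ℝ)) θ ≤
      ∑ i ∈ S, (x i : ℝ) := by
  unfold Network.costAt
  have hcost : ∀ a : Fin n, ((N₆ n x).c a : ℝ) = 1 := fun a => by norm_num [N₆]
  calc ∑ a : Fin n, ((N₆ n x).c a : ℝ) *
          ∫ ξ in (θ - ((N₆ n x).τ a : ℝ))..θ, (N₆ n x).trRate (yS S) _ a ξ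
      ≤ ∑ a : Fin n, (if a ∈ S then (1:ℝ) else 0) * x a := by
        apply Finset.sum_le_sum
        intro a _
        rw [hcost, one_mul]
        simp only [trRate_yS]
        exact integral_rate_le _ _ (by split <;> norm_num) (by positivity)
          (sub_le_self θ (by positivity))
    _ = ∑ i ∈ S, (x i : ℝ) := by
        simp only [ite_mul, one_mul, zero_mul, Finset.sum_ite_mem, Finset.univ_inter]

lemma costAt_yS_peak (S : Finset (Fin n)) :
    (N₆ n x).costAt ((N₆ n x).trRate (yS S) ((2 * Finset.univ.sup x : ℕ) : ℝ))
      ((Finset.univ.sup x : ℕ) : ℝ) = ∑ i ∈ S, (x i : ℝ) := by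
  unfold Network.costAt
  have hcost : ∀ a : Fin n, ((N₆ n x).c a : ℝ) = 1 := fun a => by norm_num [N₆]
  calc ∑ a : Fin n, ((N₆ n x).c a : ℝ) *
          ∫ ξ in (((Finset.univ.sup x : ℕ) : ℝ) - ((N₆ n x).τ a : ℝ))..((Finset.univ.sup x : ℕ) : ℝ),
            (N₆ n x).trRate (yS S) _ a ξ
      = ∑ a : Fin n, (if a ∈ S then (1:ℝ) else 0) * x a := by
        apply Finset.sum_congr rfl
        intro a _
        rw [hcost, one_mul]
        simp only [trRate_yS]
        apply integral_rate_eq _ _ (by positivity)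
        · rw [tau_cast]
          have h1 : ((x a : ℕ) : ℝ) ≤ ((Finset.univ.sup x : ℕ) : ℝ) := by
            exact_mod_cast x_le_sup a
          linarith
        · exact_mod_cast x_le_sup a
    _ = ∑ i ∈ S, (x i : ℝ) := by
        simp only [ite_mul, one_mul, zero_mul, Finset.sum_ite_mem, Finset.univ_inter]

lemma trPeakCost_yS_le (S : Finset (Fin n)) :
    (N₆ n x).trPeakCost (yS S) ((2 * Finset.univ.sup x : ℕ) : ℝ) ≤ ∑ i ∈ S, (x i : ℝ) := by
  apply Real.sSup_le
  · rintro v ⟨θ, -, rfl⟩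
    exact costAt_yS_le S θ
  · positivity

lemma trPeakCost_yS_ge (S : Finset (Fin n)) (hM : 0 < Finset.univ.sup x) :
    ∑ i ∈ S, (x i : ℝ) ≤ (N₆ n x).trPeakCost (yS S) ((2 * Finset.univ.sup x : ℕ) : ℝ) := by
  rw [← costAt_yS_peak S]
  apply le_csSup
  · exact ⟨∑ i ∈ S, (x i : ℝ), by rintro v ⟨θ, -, rfl⟩; exact costAt_yS_le S θ⟩
  · refine ⟨((Finset.univ.sup x : ℕ) : ℝ), ⟨by positivity, ?_⟩, rfl⟩
    have : (0:ℝ) < ((Finset.univ.sup x : ℕ) : ℝ) := by exact_mod_cast hM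
    push_cast
    linarith

end StmtSix

/-- Theorem 4.4: for positive integers `x₁, …, xₙ`, a target `L` and
time horizon `T = 2·max_i xᵢ`, the parallel-arc network `N₆ n x` admits an integral
temporally repeated flow of value at least `L` with peak cost at most `L` if and only
if some subset of the `xᵢ` sums to exactly `L`.  (This is a reduction from Subset Sum,
so integral MPC-TRF is at least weakly NP-hard, even on series-parallel graphs with
unit costs and a short time horizon.) -/
theorem stmt6 (n : ℕ) (x : Fin n → ℕ) (hx : ∀ i, 0 < x i) (L : ℕ) :
    (∃ y : List (Fin n) → ℝ, (N₆ n x).IsDecomposition y ∧ IsIntegral y ∧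
      (L : ℝ) ≤ (N₆ n x).trValue y ((2 * Finset.univ.sup x : ℕ) : ℝ) ∧
      (N₆ n x).trPeakCost y ((2 * Finset.univ.sup x : ℕ) : ℝ) ≤ (L : ℝ)) ↔
    (∃ S : Finset (Fin n), ∑ i ∈ S, x i = L) := by
  constructor
  · rintro ⟨y, ⟨hy0, hyST, hyfin, hycap⟩, hint, hval, hpeak⟩
    classical
    set S : Finset (Fin n) := Finset.univ.filter (fun i => y [i] ≠ 0) with hS
    have hyS : y = yS S := by
      funext p
      by_cases hp : y p = 0
      · rw [hp]
        unfold yS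
        rw [if_neg]
        · rintro ⟨i, hi, rfl⟩
          rw [hS] at hi
          simp only [Finset.mem_filter, Finset.mem_univ, true_and] at hi
          exact hi hp
      · obtain ⟨i, rfl⟩ := (isSTPath_iff _).1 (hyST p hp)
        have hiS : i ∈ S := by
          rw [hS]; simp only [Finset.mem_filter, Finset.mem_univ, true_and]; exact hp
        have hle1 : y [i] ≤ (N₆ n x).staticOf y i := by
          unfold Network.staticOf
          rw [finsum_mem_eq_sum_of_inter_support_eq y
            (t := hyfin.toFinset.filter (fun p => i ∈ p))]
          · apply Finset.single_le_sum (fun p _ => hy0 p)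
            simp only [Finset.mem_filter, Set.Finite.mem_toFinset, Function.mem_support]
            exact ⟨hp, List.mem_singleton.2 rfl⟩
          · ext p
            simp only [Set.mem_inter_iff, Set.mem_setOf_eq, Function.mem_support,
              Finset.coe_filter, Set.Finite.mem_toFinset]
            tauto
        have hcap1 : (N₆ n x).staticOf y i ≤ 1 := by
          have := hycap i
          simpa [N₆] using this
        obtain ⟨m, hm⟩ := hint [i]
        have hm1 : m = 1 := by
          have hne : m ≠ 0 := by rintro rfl; exact hp (by simpa using hm)
          have : (m : ℝ) ≤ 1 := hm ▸ hle1.trans hcap1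
          have : m ≤ 1 := by exact_mod_cast this
          omega
        have hy1 : y [i] = 1 := by rw [hm, hm1]; norm_num
        rw [hy1, yS_singleton, if_pos hiS]
    rw [hyS] at hval hpeak
    refine ⟨S, ?_⟩
    have hval' : (L : ℝ) ≤ ∑ i ∈ S, (x i : ℝ) := by rwa [trValue_yS] at hval
    have hle : (∑ i ∈ S, (x i : ℝ)) ≤ L := by
      rcases Nat.eq_zero_or_pos n with hn | hn
      · subst hn
        have : S = ∅ := Finset.eq_empty_of_isEmpty S
        simp [this]
      · have hM : 0 < Finset.univ.sup x := lt_of_lt_of_le (hx ⟨0, hn⟩) (x_le_sup ⟨0, hn⟩)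
        exact (trPeakCost_yS_ge S hM).trans hpeak
    have heq : (∑ i ∈ S, (x i : ℝ)) = L := le_antisymm hle hval'
    exact_mod_cast heq
  · rintro ⟨S, hSL⟩
    have hsum : (∑ i ∈ S, (x i : ℝ)) = (L : ℝ) := by exact_mod_cast hSL
    exact ⟨yS S, isDecomposition_yS S, isIntegral_yS S,
      by rw [trValue_yS, hsum], by rw [← hsum]; exact trPeakCost_yS_le S⟩
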